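/- arXiv:0901.0054 — 7 statements merged into one kernel-verified Lean document; each statement's English description precedes it below -/
import Mathlib

section
/- Let F be a field with char F ≠ 2. A monic original quartic polynomial f = x^4 + u·x^3 + v·x^2 + w·x ∈ F[x] is decomposable (i.e., f = g ∘ h with deg g = deg h = 2) if and only if u^3 - 4·u·v + 8·w = 0. -/
open Polynomial

private lemma quad_eq_explicit {F : Type*} [Field F] (p : F[X]) (hp : p.natDegree = 2) :
    p = C (p.coeff 2) * X ^ 2 + C (p.coeff 1) * X + C (p.coeff 0) := by
  ext n
  rcases n with _|_|_|n
  · simp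
  · simp [coeff_X]
  · simp [coeff_X, coeff_X_pow]
  · have : p.coeff (n + 3) = 0 := coeff_eq_zero_of_natDegree_lt (by omega)
    simp [this, coeff_X, coeff_X_pow]

private lemma quad_comp_explicit {F : Type*} [Field F] (p2 p1 p0 q2 q1 q0 : F) :
    ((C p2 * X ^ 2 + C p1 * X + C p0).comp (C q2 * X ^ 2 + C q1 * X + C q0) : F[X]) =
      C (p2 * q2 ^ 2) * X ^ 4 + C (2 * p2 * q2 * q1) * X ^ 3
        + C (p2 * q1 ^ 2 + 2 * p2 * q2 * q0 + p1 * q2) * X ^ 2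
        + C (2 * p2 * q1 * q0 + p1 * q1) * X + C (p2 * q0 ^ 2 + p1 * q0 + p0) := by
  simp only [add_comp, mul_comp, C_comp, X_comp, pow_comp, C_mul, C_add, C_pow, map_ofNat]
  ring

theorem quartic_decomposable_iff
    {F : Type*} [Field F] (hchar : ringChar F ≠ 2) (u v w : F) :
    (∃ g h : F[X], g.natDegree = 2 ∧ h.natDegree = 2 ∧
      (X ^ 4 + C u * X ^ 3 + C v * X ^ 2 + C w * X : F[X]) = g.comp h) ↔
    u ^ 3 - 4 * u * v + 8 * w = 0 := by
  have h2 : (2 : F) ≠ 0 := Ring.two_ne_zero hchar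
  have h4ne : (4 : F) ≠ 0 := by
    have : (4 : F) = 2 * 2 := by norm_num
    rw [this]; exact mul_ne_zero h2 h2
  constructor
  · rintro ⟨g, h, hg, hh, heq⟩
    rw [quad_eq_explicit g hg, quad_eq_explicit h hh, quad_comp_explicit] at heq
    set p2 := g.coeff 2; set p1 := g.coeff 1; set p0 := g.coeff 0
    set q2 := h.coeff 2; set q1 := h.coeff 1; set q0 := h.coeff 0
    have h4 := congrArg (fun p => coeff p 4) heq
    have h3 := congrArg (fun p => coeff p 3) heq
    have hc2 := congrArg (fun p => coeff p 2) heq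
    have h1 := congrArg (fun p => coeff p 1) heq
    simp only [coeff_add, coeff_C_mul, coeff_X_pow, coeff_X, coeff_C] at h4 h3 hc2 h1
    norm_num at h4 h3 hc2 h1
    subst h3 hc2 h1
    linear_combination (16 * p2 * q1 * q0 + 8 * p1 * q1 - 8 * p2 ^ 2 * q2 * q1 ^ 3) * h4
  · intro hcond
    refine ⟨X ^ 2 + C (v - u ^ 2 / 4) * X, X ^ 2 + C (u / 2) * X, ?_, ?_, ?_⟩
    · compute_degree!
    · compute_degree!
    · have e1 : C u = C 2 * C (u / 2) := by rw [← C_mul]; congr 1; field_simp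
      have e2 : C v = C (u / 2) ^ 2 + C (v - u ^ 2 / 4) := by
        rw [← C_pow, ← C_add]; congr 1; field_simp; ring
      have e3 : C w = C (v - u ^ 2 / 4) * C (u / 2) := by
        rw [← C_mul]; congr 1; field_simp; linear_combination hcond
      rw [e1, e2, e3]
      simp only [add_comp, mul_comp, C_comp, X_comp, pow_comp, map_ofNat]
      ring
end

section
/- Let F_q be a finite field of characteristic p, let e be a divisor of d ≥ 2 with p not dividing e. Then the normal composition map γ_{d,e} : P_e^= × P_{d/e}^0 → P_d^=, (g,h) ↦ g ∘ h, is injective, and consequently the number of degree-d polynomials over F_q admitting a decomposition with left component of degree e and monic original right component of degree d/e equals q^{e + d/e}(1 - q^{-1}). -/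
open Polynomial

private lemma tc_coeff_sum {F : Type*} [Semiring F] (w : ℕ → F) (n k : ℕ) :
    (∑ i ∈ Finset.range n, C (w i) * X ^ i).coeff k = if k < n then w k else 0 := by
  rw [finset_sum_coeff]
  simp only [coeff_C_mul, coeff_X_pow, mul_ite, mul_one, mul_zero]
  rw [Finset.sum_ite_eq (Finset.range n) k w]
  simp [Finset.mem_range]

private lemma tc_degree_sum_lt {F : Type*} [Semiring F] (w : ℕ → F) (n : ℕ) :
    (∑ i ∈ Finset.range n, C (w i) * X ^ i).degree < (n : WithBot ℕ) := by
  refine lt_of_le_of_lt (degree_sum_le _ _) ?_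
  rw [Finset.sup_lt_iff (by exact_mod_cast WithBot.bot_lt_coe n)]
  intro i hi
  exact lt_of_le_of_lt (degree_C_mul_X_pow_le _ _)
    (by exact_mod_cast Finset.mem_range.mp hi)

private lemma tc_cardA {F : Type*} [Field F] [Fintype F] (e : ℕ) :
    Nat.card {g : F[X] // g.natDegree = e ∧ g ≠ 0} =
      (Fintype.card F - 1) * Fintype.card F ^ e := by
  have hbij : Function.Bijective
      (fun g : {g : F[X] // g.natDegree = e ∧ g ≠ 0} =>
        ((⟨g.1.coeff e, by
            have := mt leadingCoeff_eq_zero.mp g.2.2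
            rwa [leadingCoeff, g.2.1] at this⟩ : {c : F // c ≠ 0}),
          fun i : Fin e => g.1.coeff i)) := by
    constructor
    · rintro ⟨a, hae, ha0⟩ ⟨b, hbe, hb0⟩ hab
      have h1 : a.coeff e = b.coeff e := congrArg (fun x => (x.1 : F)) hab
      have h2 : ∀ i : Fin e, a.coeff i = b.coeff i := fun i =>
        congrFun (congrArg Prod.snd hab) i
      refine Subtype.ext (Polynomial.ext fun k => ?_)
      rcases lt_trichotomy k e with hk | hk | hk
      · exact h2 ⟨k, hk⟩
      · subst hk; exact h1
      · rw [coeff_eq_zero_of_natDegree_lt (hae ▸ hk),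
          coeff_eq_zero_of_natDegree_lt (hbe ▸ hk)]
    · rintro ⟨⟨c, hc⟩, v⟩
      set w : ℕ → F := fun i => if h : i < e then v ⟨i, h⟩ else 0 with hw
      set P : F[X] := C c * X ^ e + ∑ i ∈ Finset.range e, C (w i) * X ^ i with hP
      have hcoeff : ∀ k, P.coeff k =
          (if k = e then c else 0) + (if k < e then w k else 0) := by
        intro k
        rw [hP, coeff_add, tc_coeff_sum, coeff_C_mul, coeff_X_pow, mul_ite, mul_one, mul_zero]
      have hdeg : P.degree = e := by
        rw [hP, degree_add_eq_left_of_degree_lt, degree_C_mul_X_pow _ hc]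
        rw [degree_C_mul_X_pow _ hc]
        exact tc_degree_sum_lt w e
      have hndeg : P.natDegree = e := natDegree_eq_of_degree_eq_some hdeg
      have hPc : P.coeff e = c := by rw [hcoeff]; simp
      have hP0 : P ≠ 0 := fun h0 => hc (by rw [h0, coeff_zero] at hPc; exact hPc.symm)
      refine ⟨⟨P, hndeg, hP0⟩, ?_⟩
      refine Prod.ext (Subtype.ext hPc) (funext fun i => ?_)
      show P.coeff i = v i
      rw [hcoeff]
      have hie : (i : ℕ) < e := i.2
      rw [if_neg (by omega), if_pos hie, hw]
      simp [hie]
  rw [Nat.card_eq_of_bijective _ hbij, Nat.card_prod]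
  have h1 : Nat.card {c : F // c ≠ 0} = Fintype.card F - 1 := by
    classical
    rw [Nat.card_congr unitsEquivNeZero.symm, Nat.card_eq_fintype_card, Fintype.card_units]
  rw [h1, Nat.card_eq_fintype_card, Fintype.card_fun, Fintype.card_fin]

private lemma tc_cardB {F : Type*} [Field F] [Fintype F] (m : ℕ) (hm : 1 ≤ m) :
    Nat.card {h : F[X] // h.Monic ∧ h.natDegree = m ∧ h.coeff 0 = 0} =
      Fintype.card F ^ (m - 1) := by
  have hbij : Function.Bijective
      (fun h : {h : F[X] // h.Monic ∧ h.natDegree = m ∧ h.coeff 0 = 0} =>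
        fun i : Fin (m - 1) => h.1.coeff (i + 1)) := by
    constructor
    · rintro ⟨a, ham, hae, ha0⟩ ⟨b, hbm, hbe, hb0⟩ hab
      have h2 : ∀ i : Fin (m - 1), a.coeff (i + 1) = b.coeff (i + 1) := fun i =>
        congrFun hab i
      refine Subtype.ext (Polynomial.ext fun k => ?_)
      rcases Nat.eq_zero_or_pos k with hk | hk
      · subst hk; rw [ha0, hb0]
      rcases lt_trichotomy k m with hkm | hkm | hkm
      · have h := h2 ⟨k - 1, by omega⟩
        simpa [Nat.sub_add_cancel hk] using h
      · subst hkm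
        have ha := ham.coeff_natDegree
        rw [hae] at ha
        have hb := hbm.coeff_natDegree
        rw [hbe] at hb
        rw [ha, hb]
      · rw [coeff_eq_zero_of_natDegree_lt (hae ▸ hkm),
          coeff_eq_zero_of_natDegree_lt (hbe ▸ hkm)]
    · intro v
      set w : ℕ → F := fun i => if h : i - 1 < m - 1 ∧ 1 ≤ i then v ⟨i - 1, h.1⟩ else 0 with hw
      set P : F[X] := X ^ m + ∑ i ∈ Finset.range m, C (w i) * X ^ i with hP
      have hcoeff : ∀ k, P.coeff k =
          (if k = m then 1 else 0) + (if k < m then w k else 0) := by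
        intro k
        rw [hP, coeff_add, tc_coeff_sum, coeff_X_pow]
      have hmono : P.Monic := by
        rw [hP]
        exact monic_X_pow_add (by simpa using tc_degree_sum_lt w m)
      have hdeg : P.degree = m := by
        rw [hP, degree_add_eq_left_of_degree_lt, degree_X_pow]
        rw [degree_X_pow]
        exact tc_degree_sum_lt w m
      have hndeg : P.natDegree = m := natDegree_eq_of_degree_eq_some hdeg
      have hc0 : P.coeff 0 = 0 := by
        rw [hcoeff, if_neg (by omega), if_pos (by omega), hw]
        simp
      refine ⟨⟨P, hmono, hndeg, hc0⟩, funext fun i => ?_⟩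
      show P.coeff (i + 1) = v i
      have hi : (i : ℕ) < m - 1 := i.2
      rw [hcoeff, if_neg (by omega), if_pos (by omega), hw]
      simp only [Nat.add_sub_cancel]
      rw [dif_pos ⟨hi, by omega⟩]
      simp
  rw [Nat.card_eq_of_bijective _ hbij, Nat.card_eq_fintype_card, Fintype.card_fun,
    Fintype.card_fin]

theorem tame_composition_injective_and_count
    {F : Type*} [Field F] [Fintype F] (p d e : ℕ) [CharP F p]
    (hd : 2 ≤ d) (he : e ∣ d) (hpe : ¬ p ∣ e) :
    Set.InjOn (fun gh : F[X] × F[X] => gh.1.comp gh.2)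
      {gh : F[X] × F[X] | gh.1.natDegree = e ∧ gh.1 ≠ 0 ∧
        gh.2.Monic ∧ gh.2.natDegree = d / e ∧ gh.2.coeff 0 = 0} ∧
    Set.ncard ((fun gh : F[X] × F[X] => gh.1.comp gh.2) ''
      {gh : F[X] × F[X] | gh.1.natDegree = e ∧ gh.1 ≠ 0 ∧
        gh.2.Monic ∧ gh.2.natDegree = d / e ∧ gh.2.coeff 0 = 0}) =
      Fintype.card F ^ (e + d / e) - Fintype.card F ^ (e + d / e - 1) := by
  set m := d / e with hmdef
  have he0 : e ≠ 0 := fun h => hpe (h ▸ dvd_zero p)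
  have he1 : 1 ≤ e := Nat.pos_of_ne_zero he0
  have hm1 : 1 ≤ m := Nat.div_pos (Nat.le_of_dvd (by omega) he) he1
  have heF : (e : F) ≠ 0 := fun h => hpe ((CharP.cast_eq_zero_iff F p e).mp h)
  have hinj : Set.InjOn (fun gh : F[X] × F[X] => gh.1.comp gh.2)
      {gh : F[X] × F[X] | gh.1.natDegree = e ∧ gh.1 ≠ 0 ∧
        gh.2.Monic ∧ gh.2.natDegree = m ∧ gh.2.coeff 0 = 0} := by
    rintro ⟨g1, h1⟩ ⟨hg1e, hg1, hh1m, hh1d, hh10⟩ ⟨g2, h2⟩ ⟨hg2e, hg2, hh2m, hh2d, hh20⟩ hcomp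
    simp only at hcomp hg1e hg1 hh1m hh1d hh10 hg2e hg2 hh2m hh2d hh20
    have hh1ne : h1 ≠ 0 := hh1m.ne_zero
    have hh2ne : h2 ≠ 0 := hh2m.ne_zero
    have hc : g1.leadingCoeff = g2.leadingCoeff := by
      have l1 := leadingCoeff_comp (p := g1) (q := h1) (by rw [hh1d]; omega)
      have l2 := leadingCoeff_comp (p := g2) (q := h2) (by rw [hh2d]; omega)
      rw [hcomp, l2] at l1
      rw [hh1m.leadingCoeff, hh2m.leadingCoeff] at l1
      simpa using l1.symm
    have hcne : g1.leadingCoeff ≠ 0 := leadingCoeff_ne_zero.mpr hg1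
    have hh : h1 = h2 := by
      by_contra hne
      have hsub : h1 - h2 ≠ 0 := sub_ne_zero.mpr hne
      have hsubdeg : 1 ≤ (h1 - h2).natDegree := by
        by_contra hns
        have h0 : (h1 - h2).natDegree = 0 := by omega
        obtain ⟨a, ha⟩ := natDegree_eq_zero.mp h0
        have ha0 : a = 0 := by
          have := congrArg (fun q => Polynomial.coeff q 0) ha
          simpa [hh10, hh20] using this
        rw [ha0, map_zero] at ha
        exact hsub ha.symm
      have hg1split : g1 = g1.eraseLead + C g1.leadingCoeff * X ^ e := by
        rw [← hg1e, ← self_sub_C_mul_X_pow]; ring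
      have hg2split : g2 = g2.eraseLead + C g1.leadingCoeff * X ^ e := by
        rw [hc, ← hg2e, ← self_sub_C_mul_X_pow]; ring
      have key : C g1.leadingCoeff * (h1 ^ e - h2 ^ e) =
          g2.eraseLead.comp h2 - g1.eraseLead.comp h1 := by
        have hthese : g1.eraseLead.comp h1 + C g1.leadingCoeff * h1 ^ e
            = g2.eraseLead.comp h2 + C g1.leadingCoeff * h2 ^ e := by
          have h' := hcomp
          rw [hg1split] at h'
          rw [hg2split] at h'
          rw [add_comp, mul_comp, C_comp, X_pow_comp, add_comp, mul_comp, C_comp,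
            X_pow_comp] at h'
          exact h'
        linear_combination hthese
      set S : F[X] := ∑ i ∈ Finset.range e, h1 ^ i * h2 ^ (e - 1 - i) with hS
      set N := (e - 1) * m with hN
      have htermdeg : ∀ i ∈ Finset.range e, (h1 ^ i * h2 ^ (e - 1 - i)).natDegree = N := by
        intro i hi
        rw [natDegree_mul (pow_ne_zero _ hh1ne) (pow_ne_zero _ hh2ne),
          natDegree_pow, natDegree_pow, hh1d, hh2d, hN, ← add_mul]
        have := Finset.mem_range.mp hi
        congr 1
        omega
      have hScoeff : S.coeff N = (e : F) := by
        rw [hS, finset_sum_coeff]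
        have hterm : ∀ i ∈ Finset.range e, (h1 ^ i * h2 ^ (e - 1 - i)).coeff N = 1 := by
          intro i hi
          have hmon : (h1 ^ i * h2 ^ (e - 1 - i)).Monic := (hh1m.pow _).mul (hh2m.pow _)
          have := hmon.coeff_natDegree
          rwa [htermdeg i hi] at this
        rw [Finset.sum_congr rfl hterm]
        simp
      have hSne : S ≠ 0 := fun h0 => heF (by rw [h0, coeff_zero] at hScoeff; exact hScoeff.symm)
      have hSdegle : S.natDegree ≤ N :=
        natDegree_sum_le_of_forall_le _ _ fun i hi => (htermdeg i hi).le
      have hSdeg : S.natDegree = N :=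
        le_antisymm hSdegle (le_natDegree_of_ne_zero (hScoeff ▸ heF))
      have hfac : h1 ^ e - h2 ^ e = S * (h1 - h2) := (geom_sum₂_mul h1 h2 e).symm
      have hL : (C g1.leadingCoeff * (h1 ^ e - h2 ^ e)).natDegree
          = N + (h1 - h2).natDegree := by
        rw [hfac, natDegree_mul (C_ne_zero.mpr hcne) (mul_ne_zero hSne hsub),
          natDegree_C, zero_add, natDegree_mul hSne hsub, hSdeg]
      have hR : (g2.eraseLead.comp h2 - g1.eraseLead.comp h1).natDegree ≤ N := by
        refine le_trans (natDegree_sub_le _ _) (sup_le ?_ ?_)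
        · rw [natDegree_comp, hh2d, hN]
          exact Nat.mul_le_mul_right _ (by have := eraseLead_natDegree_le g2; omega)
        · rw [natDegree_comp, hh1d, hN]
          exact Nat.mul_le_mul_right _ (by have := eraseLead_natDegree_le g1; omega)
      rw [key] at hL
      omega
    have hg : g1 = g2 := by
      rw [← hh] at hcomp
      by_contra hne
      have hsub : g1 - g2 ≠ 0 := sub_ne_zero.mpr hne
      have hz : (g1 - g2).comp h1 = 0 := by rw [sub_comp, hcomp, sub_self]
      have hlc := leadingCoeff_comp (p := g1 - g2) (q := h1) (by rw [hh1d]; omega)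
      rw [hz, leadingCoeff_zero, hh1m.leadingCoeff, one_pow, mul_one] at hlc
      exact hsub (leadingCoeff_eq_zero.mp hlc.symm)
    simp [hg, hh]
  refine ⟨hinj, ?_⟩
  rw [Set.ncard_image_of_injOn hinj]
  have hset : {gh : F[X] × F[X] | gh.1.natDegree = e ∧ gh.1 ≠ 0 ∧
        gh.2.Monic ∧ gh.2.natDegree = m ∧ gh.2.coeff 0 = 0}
      = {g : F[X] | g.natDegree = e ∧ g ≠ 0} ×ˢ
        {h : F[X] | h.Monic ∧ h.natDegree = m ∧ h.coeff 0 = 0} := by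
    ext ⟨g, h⟩
    simp only [Set.mem_setOf_eq, Set.mem_prod]
    tauto
  rw [hset, ← Nat.card_coe_set_eq, Nat.card_congr (Equiv.Set.prod _ _), Nat.card_prod]
  have hA : Nat.card ↥{g : F[X] | g.natDegree = e ∧ g ≠ 0}
      = (Fintype.card F - 1) * Fintype.card F ^ e := tc_cardA e
  have hB : Nat.card ↥{h : F[X] | h.Monic ∧ h.natDegree = m ∧ h.coeff 0 = 0}
      = Fintype.card F ^ (m - 1) := tc_cardB m hm1
  rw [hA, hB]
  have hq : 1 ≤ Fintype.card F := Fintype.card_pos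
  set q := Fintype.card F with hqdef
  calc (q - 1) * q ^ e * (q ^ (m - 1))
      = (q - 1) * q ^ (e + m - 1) := by
        rw [mul_assoc, ← pow_add]
        congr 2
        omega
    _ = q * q ^ (e + m - 1) - 1 * q ^ (e + m - 1) := by rw [Nat.sub_mul]
    _ = q ^ (e + m) - q ^ (e + m - 1) := by
        rw [one_mul, ← pow_succ']
        congr 2
        omega
end

section
/- Let p be an odd prime, d, e ≥ 1 integers, c = gcd(d,e), r = p^d, q = p^e. Let ν denote the 2-adic valuation. Then ν(r^2 − 1) > ν(q − 1) if and only if e/c is odd. -/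
private lemma val_two_pow_sub_one_odd (p n : ℕ) (hp : p.Prime) (hodd : Odd p) (hn : Odd n) :
    padicValNat 2 (p ^ n - 1) = padicValNat 2 (p - 1) := by
  have hp3 : 3 ≤ p := by
    rcases hp.two_le.lt_or_eq with h | h
    · omega
    · exfalso; rw [← h] at hodd; exact (Nat.not_odd_iff_even.mpr even_two) hodd
  have key : (∑ i ∈ Finset.range n, p ^ i) * (p - 1) = p ^ n - 1 :=
    geom_sum_mul_of_one_le (by omega) n
  have hsmod : (∑ i ∈ Finset.range n, p ^ i) % 2 = 1 := by
    rw [Finset.sum_nat_mod]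
    have h1 : ∀ i ∈ Finset.range n, p ^ i % 2 = 1 := fun i _ =>
      Nat.odd_iff.mp (hodd.pow)
    rw [Finset.sum_congr rfl h1]
    simp [Nat.odd_iff.mp hn]
  have hS : padicValNat 2 (∑ i ∈ Finset.range n, p ^ i) = 0 :=
    padicValNat.eq_zero_of_not_dvd (by omega)
  rw [← key, padicValNat.mul (by omega) (by omega), hS, zero_add]

theorem two_adic_valuation_comparison
    (p d e : ℕ) (hp : p.Prime) (hodd : Odd p) (hd : 1 ≤ d) (he : 1 ≤ e) :
    padicValNat 2 (p ^ (2 * d) - 1) > padicValNat 2 (p ^ e - 1) ↔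
      Odd (e / Nat.gcd d e) := by
  have hp3 : 3 ≤ p := by
    rcases hp.two_le.lt_or_eq with h | h
    · omega
    · exfalso; rw [← h] at hodd; exact (Nat.not_odd_iff_even.mpr even_two) hodd
  have hpm : p % 2 = 1 := Nat.odd_iff.mp hodd
  -- LHS via LTE for even exponent
  have hLTE : padicValNat 2 (p ^ (2 * d) - 1 ^ (2 * d)) + 1 =
      padicValNat 2 (p + 1) + padicValNat 2 (p - 1) + padicValNat 2 (2 * d) := by
    apply padicValNat.pow_two_sub_pow (by omega) (by omega) (by omega) (by omega)
    exact even_two_mul d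
  rw [one_pow] at hLTE
  have h2d : padicValNat 2 (2 * d) = 1 + padicValNat 2 d := by
    rw [padicValNat.mul (by omega) (by omega), padicValNat.self (by omega)]
  have hB : 1 ≤ padicValNat 2 (p + 1) := by
    by_contra h
    have := padicValNat.eq_zero_iff (p := 2) (n := p + 1)
    omega
  have hA : 1 ≤ padicValNat 2 (p - 1) := by
    by_contra h
    have := padicValNat.eq_zero_iff (p := 2) (n := p - 1)
    omega
  set c := Nat.gcd d e with hc
  have hc0 : c ≠ 0 := Nat.gcd_ne_zero_left (by omega)
  have hcd : c ∣ e := Nat.gcd_dvd_right d e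
  have hec0 : e / c ≠ 0 := by
    intro h
    have := Nat.div_mul_cancel hcd
    rw [h] at this; omega
  rcases Nat.even_or_odd e with heven | hodde
  · -- e even
    have hRHS : padicValNat 2 (p ^ e - 1 ^ e) + 1 =
        padicValNat 2 (p + 1) + padicValNat 2 (p - 1) + padicValNat 2 e := by
      apply padicValNat.pow_two_sub_pow (by omega) (by omega) (by omega) (by omega) heven
    rw [one_pow] at hRHS
    have hve : 1 ≤ padicValNat 2 e := by
      by_contra h
      have := padicValNat.eq_zero_iff (p := 2) (n := e)
      have h2e : (2 : ℕ) ∣ e := heven.two_dvd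
      omega
    have hvc : padicValNat 2 c = min (padicValNat 2 d) (padicValNat 2 e) := by
      have := Nat.factorization_gcd (a := d) (b := e) (by omega) (by omega)
      have h2 := congrArg (fun f => f 2) this
      simpa [Nat.factorization_def _ Nat.prime_two, Finsupp.inf_apply] using h2
    have hvdiv : padicValNat 2 (e / c) = padicValNat 2 e - padicValNat 2 c := by
      have := Nat.factorization_div hcd
      have h2 := congrArg (fun f => f 2) this
      simpa [Nat.factorization_def _ Nat.prime_two, Finsupp.sub_apply] using h2
    have hoddiff : Odd (e / c) ↔ padicValNat 2 (e / c) = 0 := by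
      rw [padicValNat.eq_zero_iff, Nat.odd_iff, Nat.two_dvd_ne_zero]
      constructor
      · intro h; exact Or.inr (Or.inr h)
      · rintro (h | h | h) <;> first | omega | exact h
    rw [hoddiff, hvdiv, hvc]
    omega
  · -- e odd
    have hRHS : padicValNat 2 (p ^ e - 1) = padicValNat 2 (p - 1) :=
      val_two_pow_sub_one_odd p e hp hodd hodde
    have hec : Odd (e / c) := by
      have := Nat.div_mul_cancel hcd
      rcases Nat.even_or_odd (e / c) with hev | hov
      · exfalso
        have : Even e := by
          rw [← this]; exact hev.mul_right c
        exact (Nat.not_odd_iff_even.mpr this) hodde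
      · exact hov
    simp only [hec, iff_true, hRHS]
    omega
end

section
/- Let p be a prime, e, d ≥ 1 integers, c = gcd(d,e), z = p^c, q = p^e, r = p^d, and b = gcd(q−1, r+1). Let δ = ν(d), ε = ν(e) (2-adic valuations), α = ν(r^2−1), β = ν(q−1). Define λ = 2 if δ < ε and λ = 1 otherwise, and μ = 1 if α > β and μ = 0 otherwise. Then b = (z^λ − 1)·2^μ/(z − 1); explicitly b = 2(z+1) if δ<ε and α>β; b = z+1 if δ<ε and α≤β; b = 2 if δ≥ε and α>β; b = 1 if δ≥ε and α≤β. -/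
private lemma gcd_pow_sub_one (a m n : ℕ) (ha : 2 ≤ a) :
    Nat.gcd (a ^ m - 1) (a ^ n - 1) = a ^ Nat.gcd m n - 1 := by
  rcases Nat.eq_zero_or_pos m with rfl | hm
  · simp
  apply Nat.dvd_antisymm
  · set k := Nat.gcd (a ^ m - 1) (a ^ n - 1) with hk
    have hone : ∀ t, k ∣ a ^ t - 1 → (a : ZMod k) ^ t = 1 := by
      intro t ht
      have h2 : ((a ^ t - 1 : ℕ) : ZMod k) = 0 := (ZMod.natCast_eq_zero_iff _ _).mpr ht
      have h3 : 1 ≤ a ^ t := Nat.one_le_pow _ _ (by omega)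
      push_cast [Nat.cast_sub h3] at h2
      rw [sub_eq_zero] at h2
      exact_mod_cast h2
    have hm1 : (a : ZMod k) ^ m = 1 := hone m (Nat.gcd_dvd_left _ _)
    have hn1 : (a : ZMod k) ^ n = 1 := hone n (Nat.gcd_dvd_right _ _)
    have hg1 : (a : ZMod k) ^ Nat.gcd m n = 1 := pow_gcd_eq_one.mpr ⟨hm1, hn1⟩
    have h3 : 1 ≤ a ^ Nat.gcd m n := Nat.one_le_pow _ _ (by omega)
    rw [← ZMod.natCast_eq_zero_iff]
    push_cast [Nat.cast_sub h3]
    rw [sub_eq_zero]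
    exact_mod_cast hg1
  · have key : ∀ t, Nat.gcd m n ∣ t → a ^ Nat.gcd m n - 1 ∣ a ^ t - 1 := by
      rintro t ⟨s, rfl⟩
      have h := Nat.sub_dvd_pow_sub_pow (a ^ Nat.gcd m n) 1 s
      rwa [one_pow, ← pow_mul] at h
    exact Nat.dvd_gcd (key m (Nat.gcd_dvd_left _ _)) (key n (Nat.gcd_dvd_right _ _))

private lemma val_gcd_min (d e : ℕ) (hd : 0 < d) (he : 0 < e) :
    padicValNat 2 (Nat.gcd d e) = min (padicValNat 2 d) (padicValNat 2 e) := by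
  have h := Nat.factorization_gcd hd.ne' he.ne'
  have h2 := DFunLike.congr_fun h 2
  rw [Finsupp.inf_apply] at h2
  simpa only [Nat.factorization_def _ Nat.prime_two] using h2

private lemma odd_quot (d e : ℕ) (hd : 0 < d) (he : 0 < e) {t : ℕ}
    (ht : d = Nat.gcd d e * t) (h : ¬ padicValNat 2 e < padicValNat 2 d) : ¬ 2 ∣ t := by
  intro h2t
  have hc0 : Nat.gcd d e ≠ 0 := Nat.gcd_ne_zero_left hd.ne'
  have ht0 : t ≠ 0 := by rintro rfl; omega
  have hvd : padicValNat 2 d = padicValNat 2 (Nat.gcd d e) + padicValNat 2 t := by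
    conv_lhs => rw [ht]
    exact padicValNat.mul hc0 ht0
  have hv := val_gcd_min d e hd he
  have h1t : 1 ≤ padicValNat 2 t := one_le_padicValNat_of_dvd ht0 h2t
  omega

private lemma two_gcd_dvd (d e : ℕ) (hd : 0 < d) (he : 0 < e)
    (h : padicValNat 2 d < padicValNat 2 e) : 2 * Nat.gcd d e ∣ e := by
  set g := Nat.gcd d e with hg
  obtain ⟨t, ht⟩ := Nat.gcd_dvd_right d e
  have hc0 : g ≠ 0 := Nat.gcd_ne_zero_left hd.ne'
  have ht0 : t ≠ 0 := by rintro rfl; omega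
  by_cases h2t : 2 ∣ t
  · obtain ⟨s, hst⟩ := h2t
    exact ⟨s, by rw [ht, hst]; ring⟩
  · exfalso
    have hv := val_gcd_min d e hd he
    rw [← hg] at hv
    have hve : padicValNat 2 e = padicValNat 2 g + padicValNat 2 t := by
      conv_lhs => rw [ht]
      exact padicValNat.mul hc0 ht0
    rw [padicValNat.eq_zero_of_not_dvd h2t] at hve
    omega

private lemma gcd_two_mul (d e : ℕ) (hd : 0 < d) (he : 0 < e) :
    Nat.gcd e (2 * d) =
      (if padicValNat 2 d < padicValNat 2 e then 2 else 1) * Nat.gcd d e := by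
  have hc0 : Nat.gcd d e ≠ 0 := Nat.gcd_ne_zero_left hd.ne'
  have h1 : Nat.gcd d e ∣ Nat.gcd e (2 * d) :=
    Nat.dvd_gcd (Nat.gcd_dvd_right d e) ((Nat.gcd_dvd_left d e).mul_left 2)
  have h2 : Nat.gcd e (2 * d) ∣ 2 * Nat.gcd d e := by
    have h3 : Nat.gcd e (2 * d) ∣ Nat.gcd (2 * e) (2 * d) :=
      Nat.dvd_gcd ((Nat.gcd_dvd_left e (2 * d)).trans (dvd_mul_left e 2))
        (Nat.gcd_dvd_right _ _)
    rwa [Nat.gcd_mul_left, Nat.gcd_comm e d] at h3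
  by_cases hde : padicValNat 2 d < padicValNat 2 e
  · simp only [hde, if_true]
    exact Nat.dvd_antisymm h2
      (Nat.dvd_gcd (two_gcd_dvd d e hd he hde) (mul_dvd_mul_left 2 (Nat.gcd_dvd_left d e)))
  · simp only [hde, if_false, one_mul]
    obtain ⟨k, hk⟩ := h1
    have hk2 : k ∣ 2 := by
      have := h2
      rw [hk, mul_comm 2 (Nat.gcd d e)] at this
      exact (Nat.mul_dvd_mul_iff_left (Nat.pos_of_ne_zero hc0)).mp this
    rcases (Nat.prime_two.eq_one_or_self_of_dvd k hk2) with rfl | rfl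
    · rw [hk, mul_one]
    · exfalso
      have h2ce : 2 * Nat.gcd d e ∣ e := by
        have := Nat.gcd_dvd_left e (2 * d)
        rw [hk] at this
        exact (by rw [mul_comm]; exact this : 2 * Nat.gcd d e ∣ e)
      obtain ⟨t, ht⟩ := h2ce
      have ht0 : t ≠ 0 := by rintro rfl; omega
      have hve : padicValNat 2 e
          = padicValNat 2 2 + padicValNat 2 (Nat.gcd d e) + padicValNat 2 t := by
        conv_lhs => rw [ht]
        rw [padicValNat.mul (by positivity) ht0, padicValNat.mul two_ne_zero hc0]
      have hv := val_gcd_min d e hd he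
      rw [padicValNat.self one_lt_two] at hve
      omega

private lemma prod_sub_one (x : ℕ) (hx : 1 ≤ x) : (x - 1) * (x + 1) = x ^ 2 - 1 := by
  have hx2 : 1 ≤ x ^ 2 := Nat.one_le_pow _ _ hx
  zify [hx, hx2]
  ring

private lemma not_two_dvd (p : ℕ) (hp : p.Prime) (hodd : p ≠ 2) : ¬ 2 ∣ p :=
  fun h2 => hodd ((Nat.prime_dvd_prime_iff_eq Nat.prime_two hp).mp h2).symm

private lemma val_sub_even (p : ℕ) (hp : p.Prime) (hodd : p ≠ 2) {k : ℕ} (hk : k ≠ 0)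
    (hke : Even k) : padicValNat 2 (p ^ k - 1) + 1 =
      padicValNat 2 (p + 1) + padicValNat 2 (p - 1) + padicValNat 2 k := by
  have hdvd : 2 ∣ p - 1 := by
    obtain ⟨j, hj⟩ := hp.odd_of_ne_two hodd
    exact ⟨j, by omega⟩
  have h := padicValNat.pow_two_sub_pow (x := p) (y := 1) hp.one_lt (by simpa using hdvd)
    (not_two_dvd p hp hodd) hk hke
  simpa using h

private lemma val_split (p : ℕ) (hp : p.Prime) (hodd : p ≠ 2) (k : ℕ) (hk : k ≠ 0) :
    padicValNat 2 (p ^ (2 * k) - 1)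
      = padicValNat 2 (p ^ k - 1) + padicValNat 2 (p ^ k + 1) := by
  have h3 : 3 ≤ p := by have := hp.two_le; omega
  have h3k : 3 ≤ p ^ k := le_trans h3 (Nat.le_self_pow hk p)
  have hne : p ^ k - 1 ≠ 0 := by omega
  rw [mul_comm 2 k, pow_mul, ← prod_sub_one _ (by omega), padicValNat.mul hne (by positivity)]

private lemma val_two_mul (k : ℕ) (hk : k ≠ 0) :
    padicValNat 2 (2 * k) = 1 + padicValNat 2 k := by
  rw [padicValNat.mul two_ne_zero hk, padicValNat.self one_lt_two]

private lemma val_odd (p : ℕ) (hp : p.Prime) (hodd : p ≠ 2) {k : ℕ} (hk : Odd k) :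
    padicValNat 2 (p ^ k - 1) = padicValNat 2 (p - 1) ∧
      padicValNat 2 (p ^ k + 1) = padicValNat 2 (p + 1) := by
  have hk0 : k ≠ 0 := by rintro rfl; rw [Nat.odd_iff] at hk; omega
  have h3 : 3 ≤ p := by have := hp.two_le; omega
  have h3k : 3 ≤ p ^ k := le_trans h3 (Nat.le_self_pow hk0 p)
  have h2k := val_sub_even p hp hodd (k := 2 * k) (by omega) (even_two_mul k)
  have hνk : padicValNat 2 k = 0 :=
    padicValNat.eq_zero_of_not_dvd (by rw [Nat.odd_iff] at hk; omega)
  rw [val_split p hp hodd k hk0, val_two_mul k hk0, hνk] at h2k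
  have ha : padicValNat 2 (p - 1) ≤ padicValNat 2 (p ^ k - 1) := by
    rw [← padicValNat_dvd_iff_le (by omega)]
    exact dvd_trans pow_padicValNat_dvd (by simpa using Nat.sub_dvd_pow_sub_pow p 1 k)
  have hb : padicValNat 2 (p + 1) ≤ padicValNat 2 (p ^ k + 1) := by
    rw [← padicValNat_dvd_iff_le (by omega)]
    exact dvd_trans pow_padicValNat_dvd (by simpa using Odd.nat_add_dvd_pow_add_pow p 1 hk)
  constructor <;> omega

private lemma val_add_even (p : ℕ) (hp : p.Prime) (hodd : p ≠ 2) {k : ℕ} (hk : k ≠ 0)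
    (hke : Even k) : padicValNat 2 (p ^ k + 1) = 1 := by
  have h2k := val_sub_even p hp hodd (k := 2 * k) (by omega) (even_two_mul k)
  have hk1 := val_sub_even p hp hodd hk hke
  rw [val_split p hp hodd k hk, val_two_mul k hk] at h2k
  omega

private lemma cond_iff (p e d : ℕ) (hp : p.Prime) (he : 0 < e) (hd : 0 < d) :
    (padicValNat 2 (p ^ e - 1) < padicValNat 2 ((p ^ d) ^ 2 - 1)) ↔
      (p ≠ 2 ∧ ¬ (padicValNat 2 d < padicValNat 2 e)) := by
  have hid : (p ^ d) ^ 2 - 1 = p ^ (2 * d) - 1 := by rw [mul_comm, pow_mul]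
  by_cases hp2 : p = 2
  · subst hp2
    have h2e : (2:ℕ) ∣ 2 ^ e := dvd_pow_self 2 he.ne'
    have h2d : (2:ℕ) ∣ 2 ^ (2 * d) := dvd_pow_self 2 (by omega)
    have h2e' : 2 ≤ 2 ^ e := Nat.le_self_pow he.ne' 2
    have h2d' : 2 ≤ 2 ^ (2 * d) := Nat.le_self_pow (by omega) 2
    have h1 : padicValNat 2 (2 ^ e - 1) = 0 := padicValNat.eq_zero_of_not_dvd (by omega)
    have h2 : padicValNat 2 ((2 ^ d) ^ 2 - 1) = 0 := by
      rw [hid]; exact padicValNat.eq_zero_of_not_dvd (by omega)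
    simp [h1, h2]
  · rw [hid]
    have hα := val_sub_even p hp hp2 (k := 2 * d) (by omega) (even_two_mul d)
    rw [val_two_mul d hd.ne'] at hα
    have hodd : Odd p := hp.odd_of_ne_two hp2
    have hb : 1 ≤ padicValNat 2 (p + 1) := by
      refine one_le_padicValNat_of_dvd (by omega) ?_
      obtain ⟨j, hj⟩ := hodd; exact ⟨j + 1, by omega⟩
    simp only [ne_eq, hp2, not_false_eq_true, true_and]
    rcases Nat.even_or_odd e with hee | heo
    · have hβ := val_sub_even p hp hp2 he.ne' hee
      have hε : 1 ≤ padicValNat 2 e :=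
        one_le_padicValNat_of_dvd he.ne' (even_iff_two_dvd.mp hee)
      omega
    · have hβ := (val_odd p hp hp2 heo).1
      have hε : padicValNat 2 e = 0 :=
        padicValNat.eq_zero_of_not_dvd (by rw [Nat.odd_iff] at heo; omega)
      omega
theorem gcd_q_sub_one_r_add_one
    (p e d : ℕ) (hp : p.Prime) (he : 0 < e) (hd : 0 < d) :
    Nat.gcd (p ^ e - 1) (p ^ d + 1) * (p ^ Nat.gcd d e - 1) =
      ((p ^ Nat.gcd d e) ^ (if padicValNat 2 d < padicValNat 2 e then 2 else 1) - 1) *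
        2 ^ (if padicValNat 2 (p ^ e - 1) < padicValNat 2 ((p ^ d) ^ 2 - 1) then 1 else 0) ∧
    Nat.gcd (p ^ e - 1) (p ^ d + 1) =
      if padicValNat 2 d < padicValNat 2 e then
        (if padicValNat 2 (p ^ e - 1) < padicValNat 2 ((p ^ d) ^ 2 - 1)
          then 2 * (p ^ Nat.gcd d e + 1) else p ^ Nat.gcd d e + 1)
      else
        (if padicValNat 2 (p ^ e - 1) < padicValNat 2 ((p ^ d) ^ 2 - 1) then 2 else 1) := by
  have hp2 := hp.two_le
  have hc0 : 0 < Nat.gcd d e := Nat.gcd_pos_of_pos_left e hd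
  have hcd : Nat.gcd d e ∣ d := Nat.gcd_dvd_left d e
  have hce : Nat.gcd d e ∣ e := Nat.gcd_dvd_right d e
  have hpcc : 2 ≤ p ^ Nat.gcd d e := le_trans hp2 (Nat.le_self_pow hc0.ne' p)
  have hpd2 : 2 ≤ p ^ d := le_trans hp2 (Nat.le_self_pow hd.ne' p)
  have hpe2 : 2 ≤ p ^ e := le_trans hp2 (Nat.le_self_pow he.ne' p)
  have hprod : (p ^ Nat.gcd d e - 1) * (p ^ Nat.gcd d e + 1) = p ^ (2 * Nat.gcd d e) - 1 := by
    rw [mul_comm 2 _, pow_mul]; exact prod_sub_one _ (by omega)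
  have hprodd : (p ^ d - 1) * (p ^ d + 1) = p ^ (2 * d) - 1 := by
    rw [mul_comm 2 d, pow_mul]; exact prod_sub_one _ (by omega)
  have hkey : Nat.gcd (p ^ e - 1) (p ^ d + 1) ∣ p ^ Nat.gcd e (2 * d) - 1 := by
    rw [← gcd_pow_sub_one p e (2 * d) hp2]
    exact Nat.dvd_gcd (Nat.gcd_dvd_left _ _)
      ((Nat.gcd_dvd_right _ _).trans (Dvd.intro_left _ hprodd))
  have hcond := cond_iff p e d hp he hd
  have hpcd1 : p ^ Nat.gcd d e - 1 ∣ p ^ d - 1 := by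
    obtain ⟨u, hu⟩ := hcd
    have h := Nat.sub_dvd_pow_sub_pow (p ^ Nat.gcd d e) 1 u
    rw [one_pow, ← pow_mul] at h
    rwa [← hu] at h
  by_cases hde : padicValNat 2 d < padicValNat 2 e
  · -- G = p^c + 1
    have hgcd2 : Nat.gcd e (2 * d) = 2 * Nat.gcd d e := by
      rw [gcd_two_mul d e hd he, if_pos hde]
    rw [hgcd2] at hkey
    obtain ⟨t, htd⟩ := hcd
    have ht0 : t ≠ 0 := by rintro rfl; omega
    have ht_odd : ¬ 2 ∣ t := odd_quot d e hd he htd (by omega)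
    have h1 : p ^ Nat.gcd d e + 1 ∣ p ^ d + 1 := by
      conv_rhs => rw [htd, pow_mul]
      simpa using Odd.nat_add_dvd_pow_add_pow (p ^ Nat.gcd d e) 1 (Nat.odd_iff.mpr (by omega))
    have h2e : 2 * Nat.gcd d e ∣ e := two_gcd_dvd d e hd he hde
    have h2 : p ^ Nat.gcd d e + 1 ∣ p ^ e - 1 := by
      obtain ⟨s, hs⟩ := h2e
      calc p ^ Nat.gcd d e + 1 ∣ p ^ (2 * Nat.gcd d e) - 1 :=
            ⟨p ^ Nat.gcd d e - 1, by rw [← hprod]; ring⟩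
        _ ∣ p ^ e - 1 := by
            have h := Nat.sub_dvd_pow_sub_pow (p ^ (2 * Nat.gcd d e)) 1 s
            rw [one_pow, ← pow_mul] at h
            rwa [← hs] at h
    have hPc : p ^ Nat.gcd d e + 1 ∣ Nat.gcd (p ^ e - 1) (p ^ d + 1) := Nat.dvd_gcd h2 h1
    have hG2 : Nat.gcd (p ^ e - 1) (p ^ d + 1) ∣ 2 * (p ^ Nat.gcd d e + 1) := by
      have hGeq : Nat.gcd (p ^ e - 1) (p ^ d + 1) =
          Nat.gcd (Nat.gcd (p ^ e - 1) (p ^ d + 1))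
            ((p ^ Nat.gcd d e - 1) * (p ^ Nat.gcd d e + 1)) :=
        (Nat.gcd_eq_left (by rw [hprod]; exact hkey)).symm
      have hsplit := gcd_mul_dvd_mul_gcd (Nat.gcd (p ^ e - 1) (p ^ d + 1))
        (p ^ Nat.gcd d e - 1) (p ^ Nat.gcd d e + 1)
      have hsmall : Nat.gcd (Nat.gcd (p ^ e - 1) (p ^ d + 1)) (p ^ Nat.gcd d e - 1) ∣ 2 := by
        have h3 : Nat.gcd (Nat.gcd (p ^ e - 1) (p ^ d + 1)) (p ^ Nat.gcd d e - 1) ∣ p ^ d + 1 :=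
          (Nat.gcd_dvd_left _ _).trans (Nat.gcd_dvd_right _ _)
        have h4 : Nat.gcd (Nat.gcd (p ^ e - 1) (p ^ d + 1)) (p ^ Nat.gcd d e - 1) ∣ p ^ d - 1 :=
          (Nat.gcd_dvd_right _ _).trans hpcd1
        have h5 := Nat.dvd_sub h3 h4
        simpa [show p ^ d + 1 - (p ^ d - 1) = 2 by omega] using h5
      calc Nat.gcd (p ^ e - 1) (p ^ d + 1)
          = Nat.gcd (Nat.gcd (p ^ e - 1) (p ^ d + 1))
              ((p ^ Nat.gcd d e - 1) * (p ^ Nat.gcd d e + 1)) := hGeq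
        _ ∣ Nat.gcd (Nat.gcd (p ^ e - 1) (p ^ d + 1)) (p ^ Nat.gcd d e - 1) *
              Nat.gcd (Nat.gcd (p ^ e - 1) (p ^ d + 1)) (p ^ Nat.gcd d e + 1) := hsplit
        _ ∣ 2 * (p ^ Nat.gcd d e + 1) := mul_dvd_mul hsmall (Nat.gcd_dvd_right _ _)
    have hnot : ¬ (2 * (p ^ Nat.gcd d e + 1) ∣ p ^ d + 1) := by
      intro hcontra
      have hvcd : padicValNat 2 (p ^ Nat.gcd d e + 1) = padicValNat 2 (p ^ d + 1) := by
        by_cases hp2' : p = 2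
        · subst hp2'
          rw [padicValNat.eq_zero_of_not_dvd
              (by have := dvd_pow_self 2 hc0.ne'; omega),
            padicValNat.eq_zero_of_not_dvd (by have := dvd_pow_self 2 hd.ne'; omega)]
        · rcases Nat.even_or_odd (Nat.gcd d e) with hcc | hcc
          · have hdd : Even d := by
              rw [htd]; exact hcc.mul_right t
            rw [val_add_even p hp hp2' hc0.ne' hcc, val_add_even p hp hp2' hd.ne' hdd]
          · have hdd : Odd d := by
              rw [htd]; exact hcc.mul (Nat.odd_iff.mpr (by omega))
            rw [(val_odd p hp hp2' hcc).2, (val_odd p hp hp2' hdd).2]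
      have hv1 : 2 ^ (padicValNat 2 (p ^ Nat.gcd d e + 1) + 1) ∣ p ^ d + 1 := by
        calc 2 ^ (padicValNat 2 (p ^ Nat.gcd d e + 1) + 1)
            = 2 * 2 ^ padicValNat 2 (p ^ Nat.gcd d e + 1) := by rw [pow_succ]; ring
          _ ∣ 2 * (p ^ Nat.gcd d e + 1) := mul_dvd_mul_left 2 pow_padicValNat_dvd
          _ ∣ p ^ d + 1 := hcontra
      rw [padicValNat_dvd_iff_le (by positivity)] at hv1
      omega
    obtain ⟨k, hkG⟩ := hPc
    have hkdvd : k ∣ 2 := by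
      rw [hkG, mul_comm 2 _] at hG2
      exact (Nat.mul_dvd_mul_iff_left (show 0 < p ^ Nat.gcd d e + 1 by omega)).mp hG2
    have hGval : Nat.gcd (p ^ e - 1) (p ^ d + 1) = p ^ Nat.gcd d e + 1 := by
      rcases Nat.prime_two.eq_one_or_self_of_dvd k hkdvd with rfl | rfl
      · rw [hkG, mul_one]
      · exfalso
        apply hnot
        have hdv : 2 * (p ^ Nat.gcd d e + 1) ∣ Nat.gcd (p ^ e - 1) (p ^ d + 1) :=
          ⟨1, by rw [hkG]; ring⟩
        exact hdv.trans (Nat.gcd_dvd_right _ _)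
    have hcondF : ¬ (padicValNat 2 (p ^ e - 1) < padicValNat 2 ((p ^ d) ^ 2 - 1)) := by
      rw [hcond]; push_neg; intro _; exact hde
    rw [hGval]
    simp only [if_pos hde, if_neg hcondF]
    refine ⟨?_, by first | rfl | trivial⟩
    rw [pow_zero, mul_one, mul_comm, prod_sub_one _ (by omega)]
  · -- G = 1 or 2
    have hgcd2 : Nat.gcd e (2 * d) = Nat.gcd d e := by
      rw [gcd_two_mul d e hd he, if_neg hde, one_mul]
    rw [hgcd2] at hkey
    have hG2 : Nat.gcd (p ^ e - 1) (p ^ d + 1) ∣ 2 := by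
      have h3 : Nat.gcd (p ^ e - 1) (p ^ d + 1) ∣ p ^ d - 1 := hkey.trans hpcd1
      have h4 : Nat.gcd (p ^ e - 1) (p ^ d + 1) ∣ p ^ d + 1 := Nat.gcd_dvd_right _ _
      have h5 := Nat.dvd_sub h4 h3
      simpa [show p ^ d + 1 - (p ^ d - 1) = 2 by omega] using h5
    by_cases hp2' : p = 2
    · subst hp2'
      have hGodd : ¬ 2 ∣ Nat.gcd (2 ^ e - 1) (2 ^ d + 1) := by
        intro h2
        have := h2.trans (Nat.gcd_dvd_left _ _)
        have h2e : (2:ℕ) ∣ 2 ^ e := dvd_pow_self 2 he.ne'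
        omega
      have hG1 : Nat.gcd (2 ^ e - 1) (2 ^ d + 1) = 1 := by
        rcases Nat.prime_two.eq_one_or_self_of_dvd _ hG2 with h | h
        · exact h
        · exact absurd (by rw [h] : (2:ℕ) ∣ Nat.gcd (2 ^ e - 1) (2 ^ d + 1)) hGodd
      have hcondF : ¬ (padicValNat 2 (2 ^ e - 1) < padicValNat 2 ((2 ^ d) ^ 2 - 1)) := by
        rw [hcond]; push_neg; intro h; exact absurd rfl h
      rw [hG1]
      simp only [if_neg hde, if_neg hcondF]
      exact ⟨by simp, by first | rfl | trivial⟩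
    · have h2G : 2 ∣ Nat.gcd (p ^ e - 1) (p ^ d + 1) := by
        have hodd : Odd p := hp.odd_of_ne_two hp2'
        have hoe : Odd (p ^ e) := hodd.pow
        have hod : Odd (p ^ d) := hodd.pow
        rw [Nat.odd_iff] at hoe hod
        exact Nat.dvd_gcd (by omega) (by omega)
      have hGv : Nat.gcd (p ^ e - 1) (p ^ d + 1) = 2 := Nat.dvd_antisymm hG2 h2G
      have hcondT : padicValNat 2 (p ^ e - 1) < padicValNat 2 ((p ^ d) ^ 2 - 1) :=
        hcond.mpr ⟨hp2', hde⟩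
      rw [hGv]
      simp only [if_neg hde, if_pos hcondT]
      exact ⟨by rw [pow_one, pow_one]; ring, by first | rfl | trivial⟩
end

section
/- Let F be a perfect field of characteristic p > 0, let l and m be positive coprime integers, write m = l·s + k with 1 ≤ k < l (division with remainder) and s = t·p + r with 0 ≤ r < p, and let w ∈ F[x] be monic of degree s. Then: (p does not divide l and k·w + l·x·w' = 0) if and only if (p divides m and there exists a monic u ∈ F[x] with w = x^r · u^p). Moreover such u, when it exists, is unique. -/
open Polynomial

theorem aux_pth_root {F : Type*} [Field F] (p : ℕ) (hp : p.Prime) [ExpChar F p] [PerfectRing F p]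
    (v : F[X]) (hv : derivative v = 0) : ∃ u : F[X], u ^ p = v := by
  haveI := Fact.mk hp
  haveI : CharP F p := by
    cases ‹ExpChar F p› with
    | zero => exact absurd hp (by norm_num)
    | prime _ => assumption
  refine ⟨(contract p v).map (frobeniusEquiv F p).symm, ?_⟩
  have h1 : map (frobenius F p) (expand F p ((contract p v).map (frobeniusEquiv F p).symm))
      = ((contract p v).map (frobeniusEquiv F p).symm) ^ p := map_frobenius_expand p _
  rw [map_expand] at h1
  rw [← h1, Polynomial.map_map]
  have : (frobenius F p).comp ((frobeniusEquiv F p).symm : F →+* F) = RingHom.id F := by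
    ext x; exact (frobeniusEquiv F p).apply_symm_apply x
  rw [this, Polynomial.map_id, expand_contract p hv hp.ne_zero]

theorem kw_plus_lxw_deriv_eq_zero_iff
    {F : Type*} [Field F] (p : ℕ) (hp : p.Prime) [ExpChar F p] [PerfectRing F p]
    (l m k s t r : ℕ) (hl : 0 < l) (hm : 0 < m) (hco : Nat.Coprime l m)
    (hdiv : m = l * s + k) (hk1 : 1 ≤ k) (hkl : k < l)
    (hdiv2 : s = t * p + r) (hr : r < p)
    (w : F[X]) (hw : w.Monic) (hwd : w.natDegree = s) :
    (((¬ p ∣ l) ∧ (k : F[X]) * w + (l : F[X]) * (X * derivative w) = 0) ↔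
      (p ∣ m ∧ ∃ u : F[X], u.Monic ∧ w = X ^ r * u ^ p)) ∧
    (∀ u₁ u₂ : F[X], u₁.Monic → u₂.Monic →
      w = X ^ r * u₁ ^ p → w = X ^ r * u₂ ^ p → u₁ = u₂) := by
  haveI := Fact.mk hp
  haveI : CharP F p := by
    cases ‹ExpChar F p› with
    | zero => exact absurd hp (by norm_num)
    | prime _ => assumption
  haveI : CharP F[X] p := Polynomial.instCharP p
  constructor
  · constructor
    · -- forward direction
      rintro ⟨hpl, hE⟩
      have hcoeff : ∀ i : ℕ, ((k + l * i : ℕ) : F) * w.coeff i = 0 := by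
        intro i
        have h0 := congrArg (fun q : F[X] => q.coeff i) hE
        simp only [coeff_add, coeff_zero] at h0
        have hX : (X * derivative w).coeff i = (i : F) * w.coeff i := by
          cases i with
          | zero => simp [mul_coeff_zero]
          | succ n => rw [coeff_X_mul, coeff_derivative]; push_cast; ring
        rw [← C_eq_natCast, ← C_eq_natCast, coeff_C_mul, coeff_C_mul, hX] at h0
        push_cast
        linear_combination h0
      have hws : w.coeff s = 1 := by rw [← hwd]; exact hw.coeff_natDegree
      have hpm : p ∣ m := by
        have h1 : ((k + l * s : ℕ) : F) = 0 := by
          have := hcoeff s; rwa [hws, mul_one] at this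
        have h2 := (CharP.cast_eq_zero_iff F p _).mp h1
        rwa [show k + l * s = m by omega] at h2
      have hks : p ∣ k + l * s := by rwa [show k + l * s = m by omega]
      have hlz : (l : ZMod p) ≠ 0 := fun h =>
        hpl ((ZMod.natCast_eq_zero_iff l p).mp h)
      have key : ∀ i : ℕ, w.coeff i ≠ 0 → i % p = r := by
        intro i hi
        have h1 : ((k + l * i : ℕ) : F) = 0 := by
          rcases mul_eq_zero.mp (hcoeff i) with h | h
          · exact h
          · exact absurd h hi
        have h2 : p ∣ k + l * i := (CharP.cast_eq_zero_iff F p _).mp h1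
        have h3 : ((k + l * i : ℕ) : ZMod p) = 0 :=
          (ZMod.natCast_eq_zero_iff _ p).mpr h2
        have h4 : ((k + l * s : ℕ) : ZMod p) = 0 :=
          (ZMod.natCast_eq_zero_iff _ p).mpr hks
        push_cast at h3 h4
        have h5 : (l : ZMod p) * (i : ZMod p) = (l : ZMod p) * (s : ZMod p) := by
          linear_combination h3 - h4
        have h6 : (i : ZMod p) = (s : ZMod p) := mul_left_cancel₀ hlz h5
        have h7 : (s : ZMod p) = (r : ZMod p) := by
          rw [hdiv2]; push_cast; simp [ZMod.natCast_self]
        have h8 : i ≡ r [MOD p] := (ZMod.natCast_eq_natCast_iff i r p).mp (h6.trans h7)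
        have h9 : i % p = r % p := h8
        rwa [Nat.mod_eq_of_lt hr] at h9
      have hXr : (X : F[X]) ^ r ∣ w := by
        rw [X_pow_dvd_iff]
        intro d hd
        by_contra h
        have h1 := key d h
        rw [Nat.mod_eq_of_lt (lt_trans hd hr)] at h1
        omega
      obtain ⟨v, hv⟩ := hXr
      have hvcoeff : ∀ j : ℕ, v.coeff j ≠ 0 → p ∣ j := by
        intro j hj
        have h1 : w.coeff (j + r) = v.coeff j := by rw [hv, coeff_X_pow_mul]
        have h2 : (j + r) % p = r := key _ (h1 ▸ hj)
        have h3 : j + r ≡ 0 + r [MOD p] := by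
          unfold Nat.ModEq
          rw [h2, zero_add, Nat.mod_eq_of_lt hr]
        have h4 : j ≡ 0 [MOD p] := Nat.ModEq.add_right_cancel' r h3
        exact Nat.modEq_zero_iff_dvd.mp h4
      have hdv : derivative v = 0 := by
        ext j
        rw [coeff_derivative, coeff_zero]
        by_cases hj : v.coeff (j + 1) = 0
        · rw [hj, zero_mul]
        · have h1 : p ∣ j + 1 := hvcoeff _ hj
          have h2 : ((j + 1 : ℕ) : F) = 0 := (CharP.cast_eq_zero_iff F p _).mpr h1
          push_cast at h2
          rw [h2, mul_zero]
      obtain ⟨u, hu⟩ := aux_pth_root p hp v hdv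
      have hwu : w = X ^ r * u ^ p := by rw [hv, hu]
      have hune : u ≠ 0 := by
        rintro rfl
        rw [zero_pow hp.ne_zero, mul_zero] at hwu
        exact hw.ne_zero hwu
      have hlead : u.leadingCoeff ^ p = 1 := by
        have h1 : w.leadingCoeff = 1 := hw
        rw [hwu, leadingCoeff_mul, leadingCoeff_X_pow, one_mul, leadingCoeff_pow] at h1
        exact h1
      have humonic : u.Monic := by
        have := frobenius_inj F p (a₁ := u.leadingCoeff) (a₂ := 1)
          (by rw [frobenius_def, frobenius_def, hlead, one_pow])
        exact this
      exact ⟨hpm, u, humonic, hwu⟩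
    · -- backward direction
      rintro ⟨hpm, u, hu, hwu⟩
      constructor
      · intro hpl
        have h1 : p ∣ Nat.gcd l m := Nat.dvd_gcd hpl hpm
        rw [hco] at h1
        exact hp.ne_one (Nat.dvd_one.mp h1)
      · have h5 : m = p * (l * t) + (l * r + k) := by rw [hdiv, hdiv2]; ring
        have h6 : p ∣ l * r + k :=
          (Nat.dvd_add_right (dvd_mul_right p (l * t))).mp (h5 ▸ hpm)
        have hcast : ((l * r + k : ℕ) : F[X]) = 0 := (CharP.cast_eq_zero_iff F[X] p _).mpr h6
        push_cast at hcast
        have hdu : derivative (u ^ p) = 0 := by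
          rw [derivative_pow]
          have : ((p : ℕ) : F[X]) = 0 := CharP.cast_eq_zero F[X] p
          rw [C_eq_natCast, this, zero_mul, zero_mul]
        have hXd : X * derivative w = (r : F[X]) * w := by
          rw [hwu, derivative_mul, hdu, mul_zero, add_zero, derivative_X_pow]
          rcases Nat.eq_zero_or_pos r with h0 | hpos
          · subst h0; simp
          · have hr1 : r - 1 + 1 = r := Nat.succ_pred_eq_of_pos hpos
            calc X * (C (r : F) * X ^ (r - 1) * u ^ p)
                = C (r : F) * (X ^ (r - 1 + 1) * u ^ p) := by ring
              _ = (r : F[X]) * (X ^ r * u ^ p) := by rw [hr1, C_eq_natCast]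
        rw [hXd]
        linear_combination w * hcast
  · -- uniqueness
    intro u₁ u₂ _ _ h1 h2
    have hx : (X : F[X]) ^ r ≠ 0 := pow_ne_zero _ X_ne_zero
    have h3 : u₁ ^ p = u₂ ^ p := mul_left_cancel₀ hx (h1 ▸ h2)
    have h4 : (u₁ - u₂) ^ p = 0 := by
      rw [sub_pow_char, h3, sub_self]
    have h5 : u₁ - u₂ = 0 := pow_eq_zero_iff hp.ne_zero |>.mp h4
    exact sub_eq_zero.mp h5
end

section
/- Over a finite field F_q of characteristic p with p dividing the composite degree n = l·m (l, m ≥ 2), the set D_n^φ of Frobenius compositions of degree n (polynomials of degree n lying in F_q[x^p] that are decomposable compositions) satisfies #D_n^φ = q^{n/p + 1}(1 − q^{-1}). -/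
open Polynomial

theorem count_frobenius_compositions
    {F : Type*} [Field F] [Fintype F] (p l m : ℕ) [CharP F p] (hp : p.Prime)
    (hl : 2 ≤ l) (hm : 2 ≤ m) (hdvd : p ∣ l * m) :
    Set.ncard {f : F[X] | f.natDegree = l * m ∧
      (∃ g h : F[X], 2 ≤ g.natDegree ∧ 2 ≤ h.natDegree ∧ f = g.comp h) ∧
      ∃ g' : F[X], f = g'.comp (X ^ p)} =
    Fintype.card F ^ (l * m / p + 1) - Fintype.card F ^ (l * m / p) := by
  classical
  have hp2 := hp.two_le
  set N := l * m / p with hNdef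
  have hNp : N * p = l * m := Nat.div_mul_cancel hdvd
  have hN2 : 2 ≤ N := by
    rcases Nat.lt_or_ge N 2 with h | h
    · exfalso
      have hlm : 4 ≤ l * m := Nat.mul_le_mul hl hm
      have h01 : N = 0 ∨ N = 1 := by
        interval_cases N <;> simp

      rcases h01 with h0 | h1
      · rw [h0, zero_mul] at hNp; omega
      · rw [h1, one_mul] at hNp
        have hpl : l ∣ p := ⟨m, hNp⟩
        rcases Nat.Prime.eq_one_or_self_of_dvd hp l hpl with h1 | h1 <;> nlinarith
    · exact h
  -- rewrite the set as an image
  have hset : {f : F[X] | f.natDegree = l * m ∧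
      (∃ g h : F[X], 2 ≤ g.natDegree ∧ 2 ≤ h.natDegree ∧ f = g.comp h) ∧
      ∃ g' : F[X], f = g'.comp (X ^ p)} =
      (fun g : F[X] => g.comp (X ^ p)) '' {g : F[X] | g.natDegree = N} := by
    ext f
    simp only [Set.mem_setOf_eq, Set.mem_image]
    constructor
    · rintro ⟨hdeg, -, g', rfl⟩
      refine ⟨g', ?_, rfl⟩
      have h1 : g'.natDegree * p = l * m := by
        rw [← hdeg, natDegree_comp, natDegree_X_pow]
      have : g'.natDegree * p = N * p := by omega
      exact (Nat.eq_of_mul_eq_mul_right (by omega) this.symm).symm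
    · rintro ⟨g, hg, rfl⟩
      have hdeg : (g.comp (X ^ p)).natDegree = l * m := by
        rw [natDegree_comp, natDegree_X_pow, hg, hNp]
      refine ⟨hdeg, ⟨g, X ^ p, by rw [hg]; exact hN2,
        by rw [natDegree_X_pow]; exact hp2, rfl⟩, g, rfl⟩
  rw [hset]
  have hinj : Function.Injective (fun g : F[X] => g.comp (X ^ p)) := by
    intro a b hab
    have h0 : (a - b).comp (X ^ p) = 0 := by
      rw [sub_comp]; simpa using sub_eq_zero_of_eq hab
    rcases comp_eq_zero_iff.mp h0 with h | ⟨-, h⟩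
    · exact sub_eq_zero.mp h
    · exfalso
      have := congrArg natDegree h
      simp only [natDegree_X_pow, natDegree_C] at this
      omega
  rw [Set.ncard_image_of_injective _ hinj]
  -- compute the cardinality of polynomials of natDegree N
  have hdlt : ∀ k : ℕ, {g : F[X] | g.degree < (k : ℕ)} =
      ((Polynomial.degreeLT F k : Submodule F F[X]) : Set F[X]) := by
    intro k; ext g; simp [Polynomial.mem_degreeLT]
  have hfin : ∀ k : ℕ, {g : F[X] | g.degree < (k : ℕ)}.Finite := by
    intro k
    rw [hdlt k]
    haveI : Finite (Polynomial.degreeLT F k) :=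
      Finite.of_equiv _ (Polynomial.degreeLTEquiv F k).toEquiv.symm
    exact (Polynomial.degreeLT F k : Submodule F F[X]).carrier.toFinite
  have hcard : ∀ k : ℕ, Set.ncard {g : F[X] | g.degree < (k : ℕ)} = Fintype.card F ^ k := by
    intro k
    rw [hdlt k, ← Nat.card_coe_set_eq]
    have : Nat.card ((Polynomial.degreeLT F k : Submodule F F[X]) : Set F[X]) =
        Nat.card (Fin k → F) := Nat.card_congr (Polynomial.degreeLTEquiv F k).toEquiv
    rw [this]
    simp [Nat.card_eq_fintype_card]
  have hsub : {g : F[X] | g.natDegree = N} =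
      {g : F[X] | g.degree < ((N + 1 : ℕ) : ℕ)} \ {g : F[X] | g.degree < (N : ℕ)} := by
    ext g
    simp only [Set.mem_diff, Set.mem_setOf_eq]
    constructor
    · intro h
      have hg0 : g ≠ 0 := by
        intro h0; rw [h0, natDegree_zero] at h; omega
      constructor
      · exact (natDegree_lt_iff_degree_lt hg0).mp (by omega)
      · intro hlt
        have := (natDegree_lt_iff_degree_lt hg0).mpr hlt
        omega
    · rintro ⟨h1, h2⟩
      have hg0 : g ≠ 0 := by
        intro h0
        rw [h0] at h2
        exact h2 (by rw [degree_zero]; exact_mod_cast WithBot.bot_lt_coe N)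
      have hA := (natDegree_lt_iff_degree_lt hg0).mpr h1
      have hB : ¬ g.natDegree < N := fun hc => h2 ((natDegree_lt_iff_degree_lt hg0).mp hc)
      omega
  have hss : {g : F[X] | g.degree < ((N : ℕ) : WithBot ℕ)} ⊆
      {g : F[X] | g.degree < (((N + 1 : ℕ)) : WithBot ℕ)} := by
    intro g hg
    simp only [Set.mem_setOf_eq] at hg ⊢
    exact lt_trans hg (by exact_mod_cast Nat.lt_succ_self N)
  rw [hsub, Set.ncard_diff hss (hfin N), hcard, hcard]
end

section
/- Let F be a field of characteristic p ≥ 2, let l, m, n ≥ 2 be integers with p | n = l·m and p ∤ l, and suppose f = g ∘ h = g* ∘ h* with all of g, h, g*, h* monic original, deg g = deg h* = m, deg h = deg g* = l, and f' ≠ 0. Then g' ≠ 0, (h*)' ≠ 0, and deg (h*)' < m − l. -/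
open Polynomial

theorem wild_collision_derivative_degree_bound
    {F : Type*} [Field F] (p l m : ℕ) [CharP F p] (hp : p.Prime)
    (hl : 2 ≤ l) (hm : 2 ≤ m) (hdvd : p ∣ l * m) (hpl : ¬ p ∣ l)
    (g h g' h' : F[X])
    (hg : g.Monic) (hgd : g.natDegree = m) (hg0 : g.coeff 0 = 0)
    (hh : h.Monic) (hhd : h.natDegree = l) (hh0 : h.coeff 0 = 0)
    (hg' : g'.Monic) (hg'd : g'.natDegree = l) (hg'0 : g'.coeff 0 = 0)
    (hh' : h'.Monic) (hh'd : h'.natDegree = m) (hh'0 : h'.coeff 0 = 0)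
    (heq : g.comp h = g'.comp h')
    (hf : derivative (g.comp h) ≠ 0) :
    derivative g ≠ 0 ∧ derivative h' ≠ 0 ∧
      ((derivative h').natDegree : ℤ) < (m : ℤ) - (l : ℤ) := by
  have hpm : p ∣ m := (hp.dvd_mul.mp hdvd).resolve_left hpl
  have hcomp1 : derivative (g.comp h) = derivative h * (derivative g).comp h :=
    derivative_comp g h
  have hcomp2 : derivative (g'.comp h') = derivative h' * (derivative g').comp h' :=
    derivative_comp g' h'
  have hf2 : derivative (g'.comp h') ≠ 0 := heq ▸ hf
  -- nonvanishing
  have hDg : derivative g ≠ 0 := by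
    intro h0
    apply hf
    rw [hcomp1, h0, zero_comp, mul_zero]
  have hDh : derivative h ≠ 0 := by
    intro h0
    apply hf
    rw [hcomp1, h0, zero_mul]
  have hDh' : derivative h' ≠ 0 := by
    intro h0
    apply hf2
    rw [hcomp2, h0, zero_mul]
  refine ⟨hDg, hDh', ?_⟩
  -- derivative g' has natDegree l - 1
  have hlF : (l : F) ≠ 0 := by
    simpa [CharP.cast_eq_zero_iff F p l] using hpl
  have hDg'coeff : (derivative g').coeff (l - 1) ≠ 0 := by
    rw [coeff_derivative]
    have h1 : l - 1 + 1 = l := by omega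
    rw [h1]
    have : g'.coeff l = 1 := by
      have := hg'.leadingCoeff
      rwa [leadingCoeff, hg'd] at this
    rw [this, one_mul]
    have h2 : ((l - 1 : ℕ) : F) + 1 = (l : F) := by
      rw [Nat.cast_sub (by omega : 1 ≤ l)]; push_cast; ring
    rw [h2]
    exact hlF
  have hDg'ne : derivative g' ≠ 0 := fun h0 => hDg'coeff (by rw [h0]; simp)
  have hDg'deg : (derivative g').natDegree = l - 1 :=
    le_antisymm (by simpa [hg'd] using natDegree_derivative_le g')
      (le_natDegree_of_ne_zero hDg'coeff)
  -- derivative g has natDegree ≤ m - 2 since p ∣ m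
  have hDgdeg : (derivative g).natDegree ≤ m - 2 := by
    have hle : (derivative g).natDegree ≤ m - 1 := by
      simpa [hgd] using natDegree_derivative_le g
    have hco : (derivative g).coeff (m - 1) = 0 := by
      rw [coeff_derivative]
      have h1 : m - 1 + 1 = m := by omega
      rw [h1]
      have : g.coeff m = 1 := by
        have := hg.leadingCoeff
        rwa [leadingCoeff, hgd] at this
      rw [this, one_mul]
      have h2 : ((m - 1 : ℕ) : F) + 1 = (m : F) := by
        rw [Nat.cast_sub (by omega : 1 ≤ m)]; push_cast; ring
      rw [h2]
      exact (CharP.cast_eq_zero_iff F p m).mpr hpm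
    by_contra hcon
    have : (derivative g).natDegree = m - 1 := by omega
    exact leadingCoeff_ne_zero.mpr hDg (by rw [leadingCoeff, this]; exact hco)
  have hDhdeg : (derivative h).natDegree ≤ l - 1 := by
    simpa [hhd] using natDegree_derivative_le h
  -- degree equation
  have hne1 : (derivative g).comp h ≠ 0 := fun h0 => hf (by rw [hcomp1, h0, mul_zero])
  have hne2 : (derivative g').comp h' ≠ 0 := fun h0 => hf2 (by rw [hcomp2, h0, mul_zero])
  have hd1 : (derivative (g.comp h)).natDegree =
      (derivative h).natDegree + (derivative g).natDegree * l := by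
    rw [hcomp1, natDegree_mul hDh hne1, natDegree_comp, hhd]
  have hd2 : (derivative (g'.comp h')).natDegree =
      (derivative h').natDegree + (l - 1) * m := by
    rw [hcomp2, natDegree_mul hDh' hne2, natDegree_comp, hDg'deg, hh'd]
  have hkey : (derivative h').natDegree + (l - 1) * m =
      (derivative h).natDegree + (derivative g).natDegree * l := by
    rw [← hd1, ← hd2, heq]
  have h2 : (derivative g).natDegree * l ≤ (m - 2) * l :=
    Nat.mul_le_mul_right l hDgdeg
  have hm2 : 2 ≤ m := hm
  have hl2 : 2 ≤ l := hl
  zify [Nat.le_of_lt_succ, show 1 ≤ l by omega, show 2 ≤ m by omega] at hkey h2 hDhdeg ⊢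
  nlinarith [hkey, h2, hDhdeg]
end
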